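/- arXiv:1203.4791 — 3 statements merged into one kernel-verified Lean document; each statement's English description precedes it below -/
import Mathlib

section
/- For every odd prime p and every positive integer α, L(p^α) = α − 1 + L(p). -/
open Real Filter

/-- The Carmichael lambda function: the exponent of the multiplicative group `(ZMod n)ˣ`. -/
noncomputable def carmichael (n : ℕ) : ℕ := Monoid.exponent (ZMod n)ˣ

/-- `L n` is the smallest nonnegative integer `k` such that the `k`-th iterate of the
Carmichael function at `n` equals `1`. -/
noncomputable def L (n : ℕ) : ℕ := sInf {k | carmichael^[k] n = 1}

lemma carmichael_one : carmichael 1 = 1 :=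
  Monoid.exp_eq_one_of_subsingleton

lemma carmichael_pos {n : ℕ} (hn : n ≠ 0) : 0 < carmichael n := by
  have : NeZero n := ⟨hn⟩
  exact Nat.pos_of_ne_zero Monoid.exponent_ne_zero_of_finite

lemma carmichael_dvd_totient {n : ℕ} (hn : n ≠ 0) : carmichael n ∣ Nat.totient n := by
  have : NeZero n := ⟨hn⟩
  have := Group.exponent_dvd_card (G := (ZMod n)ˣ)
  rwa [ZMod.card_units_eq_totient] at this

lemma carmichael_lt {n : ℕ} (hn : 1 < n) : carmichael n < n :=
  lt_of_le_of_lt (Nat.le_of_dvd (Nat.totient_pos.2 (by omega)) (carmichael_dvd_totient (by omega)))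
    (Nat.totient_lt n hn)

lemma carmichael_dvd_of_dvd {a n : ℕ} (hn : n ≠ 0) (h : a ∣ n) :
    carmichael a ∣ carmichael n := by
  have : NeZero n := ⟨hn⟩
  exact MonoidHom.exponent_dvd (ZMod.unitsMap_surjective h)

lemma carmichael_lcm {a b : ℕ} (ha : a ≠ 0) (hb : b ≠ 0) :
    carmichael (Nat.lcm a b) = Nat.lcm (carmichael a) (carmichael b) := by
  have hl : Nat.lcm a b ≠ 0 := Nat.lcm_ne_zero ha hb
  have : NeZero (Nat.lcm a b) := ⟨hl⟩
  have : NeZero a := ⟨ha⟩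
  have : NeZero b := ⟨hb⟩
  apply Nat.dvd_antisymm
  · set f : ZMod (Nat.lcm a b) →+* ZMod a × ZMod b :=
      RingHom.prod (ZMod.castHom (Nat.dvd_lcm_left a b) (ZMod a))
        (ZMod.castHom (Nat.dvd_lcm_right a b) (ZMod b)) with hf
    have hinj : Function.Injective f := by
      rw [injective_iff_map_eq_zero]
      intro x hx
      rw [hf] at hx
      have h1 : ((x.val : ℕ) : ZMod a) = 0 := by
        have := congrArg Prod.fst hx
        simpa [ZMod.natCast_val] using this
      have h2 : ((x.val : ℕ) : ZMod b) = 0 := by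
        have := congrArg Prod.snd hx
        simpa [ZMod.natCast_val] using this
      rw [ZMod.natCast_eq_zero_iff] at h1 h2
      have : Nat.lcm a b ∣ x.val := Nat.lcm_dvd h1 h2
      have hz : ((x.val : ℕ) : ZMod (Nat.lcm a b)) = 0 :=
        (ZMod.natCast_eq_zero_iff _ _).2 this
      rwa [ZMod.natCast_val, ZMod.cast_id] at hz
    have huinj : Function.Injective (Units.map (f : ZMod (Nat.lcm a b) →* ZMod a × ZMod b)) := by
      intro u v huv
      ext
      exact hinj (congrArg Units.val huv)
    have := Monoid.exponent_dvd_of_monoidHom _ huinj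
    calc carmichael (Nat.lcm a b) ∣ Monoid.exponent ((ZMod a × ZMod b)ˣ) := this
      _ ∣ Nat.lcm (carmichael a) (carmichael b) := by
        have e : (ZMod a × ZMod b)ˣ ≃* (ZMod a)ˣ × (ZMod b)ˣ := MulEquiv.prodUnits
        rw [Monoid.exponent_eq_of_mulEquiv e, Monoid.exponent_prod, lcm_eq_nat_lcm]
        exact dvd_rfl
  · exact Nat.lcm_dvd
      (MonoidHom.exponent_dvd (ZMod.unitsMap_surjective (Nat.dvd_lcm_left a b)))
      (MonoidHom.exponent_dvd (ZMod.unitsMap_surjective (Nat.dvd_lcm_right a b)))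

lemma carmichael_prime (p : ℕ) (hp : p.Prime) : carmichael p = p - 1 := by
  have : Fact p.Prime := ⟨hp⟩
  have : IsCyclic (ZMod p)ˣ := inferInstance
  rw [carmichael, IsCyclic.exponent_eq_card, Nat.card_eq_fintype_card,
    ZMod.card_units_eq_totient, Nat.totient_prime hp]

lemma pow_sub_one_dvd_carmichael (p : ℕ) (hp : p.Prime) (hodd : Odd p) (α : ℕ) :
    p ^ (α - 1) ∣ carmichael (p ^ α) := by
  have : Fact p.Prime := ⟨hp⟩
  have hp0 : p ≠ 0 := hp.ne_zero
  have : NeZero (p ^ α) := ⟨pow_ne_zero _ hp0⟩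
  set m := carmichael (p ^ α) with hm
  have hm0 : m ≠ 0 := Monoid.exponent_ne_zero_of_finite
  have hcop : Nat.Coprime (1 + p) (p ^ α) :=
    Nat.Coprime.pow_right _ (by simpa [Nat.add_comm] using Nat.coprime_succ_self p)
  set u := ZMod.unitOfCoprime (1 + p) hcop with hu
  have hum : u ^ m = 1 := Monoid.pow_exponent_eq_one u
  have hc : (((1 + p) ^ m : ℕ) : ZMod (p ^ α)) = ((1 : ℕ) : ZMod (p ^ α)) := by
    have := congrArg (Units.val) hum
    push_cast
    simpa [hu, ZMod.coe_unitOfCoprime] using this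
  have hmod : (1 + p) ^ m ≡ 1 [MOD p ^ α] := (ZMod.natCast_eq_natCast_iff _ _ _).mp hc
  have hdvd : p ^ α ∣ (1 + p) ^ m - 1 :=
    (Nat.modEq_iff_dvd' (Nat.one_le_pow _ _ (by omega))).mp (hmod.symm)
  have hxy : p ∣ (1 + p) - 1 := by simp
  have hx : ¬ p ∣ (1 + p) := by
    intro h
    exact absurd (Nat.dvd_sub h (dvd_refl p)) (by simpa using hp.one_lt.ne')
  have hlte := Nat.emultiplicity_pow_sub_pow hp hodd hxy hx m
  simp only [one_pow] at hlte
  have hpp : emultiplicity p ((1 + p) - 1) = 1 := by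
    have : (1 + p) - 1 = p := by omega
    rw [this]
    refine emultiplicity_eq_of_dvd_of_not_dvd (by simpa using dvd_refl p) ?_
    intro h
    have h1 : p ^ (1 + 1) ≤ p := Nat.le_of_dvd hp.pos h
    have h2 := hp.two_le
    rw [pow_succ, pow_one] at h1
    nlinarith [h1, h2]
  have hle : (α : ℕ∞) ≤ emultiplicity p ((1 + p) ^ m - 1) := le_emultiplicity_of_pow_dvd hdvd
  rw [hlte, hpp] at hle
  have hfin : FiniteMultiplicity p m :=
    Nat.finiteMultiplicity_iff.mpr ⟨hp.ne_one, Nat.pos_of_ne_zero hm0⟩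
  rw [hfin.emultiplicity_eq_multiplicity] at hle
  have hle' : α ≤ 1 + multiplicity p m := by exact_mod_cast hle
  apply pow_dvd_of_le_emultiplicity (k := α - 1)
  rw [hfin.emultiplicity_eq_multiplicity]
  exact_mod_cast Nat.le_of_lt_succ (by omega : α - 1 < multiplicity p m + 1)

lemma carmichael_prime_pow (p : ℕ) (hp : p.Prime) (hodd : Odd p) (α : ℕ) (hα : 1 ≤ α) :
    carmichael (p ^ α) = p ^ (α - 1) * (p - 1) := by
  have hp0 : p ≠ 0 := hp.ne_zero
  have hnd : ¬ p ∣ (p - 1) := fun h =>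
    absurd (Nat.le_of_dvd (by have := hp.two_le; omega : 0 < p - 1) h) (by have := hp.two_le; omega)
  have hcop : Nat.Coprime (p ^ (α - 1)) (p - 1) :=
    Nat.Coprime.pow_left _ (hp.coprime_iff_not_dvd.mpr hnd)
  apply Nat.dvd_antisymm
  · have h := carmichael_dvd_totient (n := p ^ α) (pow_ne_zero _ hp0)
    rwa [Nat.totient_prime_pow hp (by omega)] at h
  · refine hcop.mul_dvd_of_dvd_of_dvd (pow_sub_one_dvd_carmichael p hp hodd α) ?_
    have h1 : carmichael p ∣ carmichael (p ^ α) :=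
      carmichael_dvd_of_dvd (pow_ne_zero _ hp0) (dvd_pow_self p (by omega))
    rwa [carmichael_prime p hp] at h1

lemma carmichael_iter_pos {n : ℕ} (hn : n ≠ 0) (k : ℕ) : carmichael^[k] n ≠ 0 := by
  induction k generalizing n with
  | zero => simpa
  | succ k ih =>
    rw [Function.iterate_succ_apply]
    exact ih (carmichael_pos hn).ne'

lemma exists_iter_eq_one {n : ℕ} (hn : n ≠ 0) : ∃ k, carmichael^[k] n = 1 := by
  induction n using Nat.strong_induction_on with
  | _ n ih =>
    rcases eq_or_lt_of_le (Nat.one_le_iff_ne_zero.mpr hn) with h1 | h1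
    · exact ⟨0, h1.symm⟩
    · obtain ⟨k, hk⟩ := ih (carmichael n) (carmichael_lt h1)
        (carmichael_pos hn).ne'
      exact ⟨k + 1, by rwa [Function.iterate_succ_apply]⟩

lemma L_spec {n : ℕ} (hn : n ≠ 0) : carmichael^[L n] n = 1 :=
  Nat.sInf_mem (exists_iter_eq_one hn)

lemma L_le {n k : ℕ} (h : carmichael^[k] n = 1) : L n ≤ k := Nat.sInf_le h

lemma iter_eq_one_of_le {n : ℕ} (hn : n ≠ 0) {k : ℕ} (hk : L n ≤ k) :
    carmichael^[k] n = 1 := by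
  induction k with
  | zero => exact Nat.le_zero.mp hk ▸ L_spec hn
  | succ k ih =>
    rcases Nat.lt_or_ge (L n) (k + 1) with h | h
    · rw [Function.iterate_succ_apply', ih (by omega), carmichael_one]
    · exact Nat.le_antisymm hk h ▸ L_spec hn

lemma L_succ {n : ℕ} (hn : 1 < n) : L n = L (carmichael n) + 1 := by
  have hn0 : n ≠ 0 := by omega
  have hc0 : carmichael n ≠ 0 := (carmichael_pos hn0).ne'
  apply Nat.le_antisymm
  · exact L_le (by rw [Function.iterate_succ_apply]; exact L_spec hc0)
  · have hL0 : L n ≠ 0 := by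
      intro h
      have := L_spec hn0
      rw [h, Function.iterate_zero_apply] at this
      omega
    obtain ⟨k, hk⟩ := Nat.exists_eq_succ_of_ne_zero hL0
    have := L_spec hn0
    rw [hk, Function.iterate_succ_apply] at this
    have := L_le this
    omega

lemma iter_lcm {a b : ℕ} (ha : a ≠ 0) (hb : b ≠ 0) (k : ℕ) :
    carmichael^[k] (Nat.lcm a b) = Nat.lcm (carmichael^[k] a) (carmichael^[k] b) := by
  induction k with
  | zero => simp
  | succ k ih =>
    simp only [Function.iterate_succ_apply']
    rw [ih, carmichael_lcm (carmichael_iter_pos ha k) (carmichael_iter_pos hb k)]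

lemma L_lcm {a b : ℕ} (ha : a ≠ 0) (hb : b ≠ 0) :
    L (Nat.lcm a b) = max (L a) (L b) := by
  apply Nat.le_antisymm
  · apply L_le
    rw [iter_lcm ha hb, iter_eq_one_of_le ha (le_max_left _ _),
      iter_eq_one_of_le hb (le_max_right _ _), Nat.lcm_self]
  · have h := L_spec (Nat.lcm_ne_zero ha hb)
    rw [iter_lcm ha hb] at h
    have h1 : carmichael^[L (Nat.lcm a b)] a = 1 :=
      Nat.eq_one_of_dvd_one (h ▸ Nat.dvd_lcm_left _ _)
    have h2 : carmichael^[L (Nat.lcm a b)] b = 1 :=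
      Nat.eq_one_of_dvd_one (h ▸ Nat.dvd_lcm_right _ _)
    exact max_le (L_le h1) (L_le h2)

/-- For every odd prime `p` and every positive integer `α`, `L (p^α) = α − 1 + L p`. -/
theorem L_odd_prime_power (p : ℕ) (hp : p.Prime) (hodd : Odd p) (α : ℕ) (hα : 1 ≤ α) :
    L (p ^ α) = α - 1 + L p := by
  have hp2 := hp.two_le
  have hp3 : 3 ≤ p := by
    have := Nat.odd_iff.mp hodd
    omega
  induction α, hα using Nat.le_induction with
  | base => simp
  | succ α hα ih =>
    have h1 : 1 < p ^ (α + 1) := Nat.one_lt_pow (by omega) (by omega)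
    have hnd : ¬ p ∣ (p - 1) := fun h =>
      absurd (Nat.le_of_dvd (by omega) h) (by omega)
    have hcop : Nat.Coprime (p ^ α) (p - 1) :=
      Nat.Coprime.pow_left _ (hp.coprime_iff_not_dvd.mpr hnd)
    rw [L_succ h1, carmichael_prime_pow p hp hodd (α + 1) (by omega)]
    simp only [Nat.add_sub_cancel]
    rw [← Nat.Coprime.lcm_eq_mul hcop, L_lcm (pow_ne_zero _ (by omega)) (by omega), ih]
    have hLp : L p = L (p - 1) + 1 := by
      rw [L_succ hp.one_lt, carmichael_prime p hp]
    omega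
end

section
/- Let δ > 0 and let S be a set of primes such that S(t) := #{p ∈ S : p ≤ t} satisfies S(t) ≪ t·exp(−(log t)^δ) for all t ≥ 2. Then for all 2 ≤ Y ≤ x, the number of positive integers n ≤ x divisible by some prime p ∈ S with p > Y is O(x·exp(−(log x)^δ) + x/log x + x/log Y), where the implied constant depends only on δ and the implied constant in the hypothesis. -/
open Real Filter

private lemma tele_eq (K : ℕ) (M : ℕ) (hKM : K ≤ M) :
    ∑ k ∈ Finset.Icc K M, ((1:ℝ)/k - 1/(k+1)) = 1/K - 1/(M+1) := by
  induction M, hKM using Nat.le_induction with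
  | base => simp
  | succ M hKM ih =>
      rw [Finset.sum_Icc_succ_top (by omega), ih]
      push_cast
      ring

private lemma tele_le (K M : ℕ) (hK : 1 ≤ K) :
    ∑ k ∈ Finset.Icc K M, (1:ℝ)/(k*(k+1)) ≤ 1/K := by
  rcases le_or_gt K M with h | h
  · have heq : ∑ k ∈ Finset.Icc K M, (1:ℝ)/(k*(k+1))
        = ∑ k ∈ Finset.Icc K M, ((1:ℝ)/k - 1/(k+1)) := by
      apply Finset.sum_congr rfl
      intro k hk
      have hk1 : 1 ≤ k := le_trans hK (Finset.mem_Icc.mp hk).1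
      have hk0 : (0:ℝ) < k := by exact_mod_cast hk1
      field_simp
      ring
    rw [heq, tele_eq K M h]
    have : (0:ℝ) ≤ 1/(M+1) := by positivity
    linarith
  · rw [Finset.Icc_eq_empty (by omega)]
    simp

private lemma exp_bound (δ : ℝ) (hδ : 0 < δ) (k : ℕ) (hk : 1 ≤ k) :
    Real.exp (-(((k:ℝ)+1) * Real.log 2) ^ δ)
      ≤ 4 * Nat.factorial (Nat.ceil (2/δ)) / ((k:ℝ)*(k+1)) := by
  set m : ℕ := Nat.ceil (2/δ) with hm
  have hlog2 : (0.6931471803 : ℝ) < Real.log 2 := Real.log_two_gt_d9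
  have hk1 : (1:ℝ) ≤ k := by exact_mod_cast hk
  have hb1 : (1:ℝ) ≤ ((k:ℝ)+1) * Real.log 2 := by nlinarith
  have hb0 : (0:ℝ) ≤ ((k:ℝ)+1) * Real.log 2 := by linarith
  set b : ℝ := ((k:ℝ)+1) * Real.log 2 with hbdef
  have hw0 : 0 < b ^ δ := Real.rpow_pos_of_pos (by linarith) δ
  -- b^(δ*m) / m! ≤ exp (b^δ)
  have h1 : (b ^ δ) ^ m / (Nat.factorial m) ≤ Real.exp (b ^ δ) :=
    Real.pow_div_factorial_le_exp (x := b ^ δ) (le_of_lt hw0) m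
  have h2 : (b ^ δ) ^ m = b ^ (δ * m) := by
    rw [← Real.rpow_natCast (b ^ δ) m, ← Real.rpow_mul hb0]
  have hδm : (2:ℝ) ≤ δ * m := by
    have := Nat.le_ceil (2/δ)
    calc (2:ℝ) = δ * (2/δ) := by field_simp
    _ ≤ δ * m := by
        apply mul_le_mul_of_nonneg_left _ (le_of_lt hδ)
        exact_mod_cast this
  have h3 : b ^ (2:ℝ) ≤ b ^ (δ * m) := Real.rpow_le_rpow_of_exponent_le hb1 hδm
  have h4 : (k:ℝ)*(k+1)/4 ≤ b ^ (2:ℝ) := by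
    rw [Real.rpow_two]
    have : ((k:ℝ)+1) * (1/2) ≤ b := by
      rw [hbdef]
      nlinarith
    nlinarith
  have hfac : (0:ℝ) < (Nat.factorial m) := by exact_mod_cast Nat.factorial_pos m
  have hkk : (0:ℝ) < (k:ℝ)*(k+1) := by nlinarith
  have h5 : (k:ℝ)*(k+1)/(4 * (Nat.factorial m)) ≤ Real.exp (b ^ δ) := by
    calc (k:ℝ)*(k+1)/(4 * (Nat.factorial m)) = ((k:ℝ)*(k+1)/4) / (Nat.factorial m) := by ring
    _ ≤ b ^ (2:ℝ) / (Nat.factorial m) := by gcongr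
    _ ≤ b ^ (δ * m) / (Nat.factorial m) := by gcongr
    _ = (b ^ δ) ^ m / (Nat.factorial m) := by rw [h2]
    _ ≤ Real.exp (b ^ δ) := h1
  rw [Real.exp_neg, inv_le_comm₀ (Real.exp_pos _) (by positivity), inv_div]
  exact h5

/-- If `S` is a set of primes with counting function `S(t) ≪ t·exp(−(log t)^δ)` for some
`δ > 0`, then for all `2 ≤ Y ≤ x`, the number of `n ≤ x` divisible by some prime `p ∈ S`
with `p > Y` is `O(x·exp(−(log x)^δ) + x/log x + x/log Y)`, uniformly over such `S`. -/
theorem count_divisible_by_very_sparse_primes (δ C₀ : ℝ) (hδ : 0 < δ) (hC₀ : 0 < C₀) :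
    ∃ C : ℝ, 0 < C ∧ ∀ S : Set ℕ, (∀ p ∈ S, p.Prime) →
      (∀ t : ℝ, 2 ≤ t →
        ({p : ℕ | p ∈ S ∧ (p : ℝ) ≤ t}.ncard : ℝ) ≤ C₀ * t * Real.exp (-(Real.log t ^ δ))) →
      ∀ Y x : ℝ, 2 ≤ Y → Y ≤ x →
        ({n : ℕ | 1 ≤ n ∧ (n : ℝ) ≤ x ∧
            ∃ p ∈ S, Y < (p : ℝ) ∧ p ∣ n}.ncard : ℝ)
          ≤ C * (x * Real.exp (-(Real.log x ^ δ)) + x / Real.log x + x / Real.log Y) := by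
  classical
  set m : ℕ := Nat.ceil (2/δ) with hm
  have hmfac : (0:ℝ) < Nat.factorial m := by exact_mod_cast Nat.factorial_pos m
  refine ⟨16 * C₀ * Nat.factorial m, by positivity, ?_⟩
  intro S hS hcount Y x hY hYx
  have hx2 : (2:ℝ) ≤ x := le_trans hY hYx
  have hx0 : (0:ℝ) < x := by linarith
  have hY0 : (0:ℝ) < Y := by linarith
  set N : ℕ := Nat.floor x with hN
  have hNx : (N:ℝ) ≤ x := Nat.floor_le (le_of_lt hx0)
  set F : Finset ℕ := (Finset.Ioc 0 N).filter (fun n => ∃ p ∈ S, Y < (p:ℝ) ∧ p ∣ n) with hF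
  have hsetF : {n : ℕ | 1 ≤ n ∧ (n : ℝ) ≤ x ∧ ∃ p ∈ S, Y < (p : ℝ) ∧ p ∣ n} = ↑F := by
    ext n
    simp only [hF, Finset.coe_filter, Finset.mem_Ioc, Set.mem_setOf_eq]
    constructor
    · rintro ⟨h1, h2, h3⟩
      exact ⟨⟨h1, Nat.le_floor h2⟩, h3⟩
    · rintro ⟨⟨h1, h2⟩, h3⟩
      refine ⟨h1, le_trans ?_ hNx, h3⟩
      exact_mod_cast h2
  rw [hsetF, Set.ncard_coe_finset]
  set P : Finset ℕ := (Finset.Ioc 0 N).filter (fun p => p ∈ S ∧ Y < (p:ℝ)) with hP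
  have hFP : F ⊆ P.biUnion (fun p => (Finset.Ioc 0 N).filter (fun n => p ∣ n)) := by
    intro n hn
    rw [hF, Finset.mem_filter, Finset.mem_Ioc] at hn
    obtain ⟨⟨hn0, hnN⟩, p, hpS, hpY, hpn⟩ := hn
    have hp0 : 0 < p := (hS p hpS).pos
    have hpn' : p ≤ n := Nat.le_of_dvd hn0 hpn
    rw [Finset.mem_biUnion]
    refine ⟨p, ?_, ?_⟩
    · rw [hP, Finset.mem_filter, Finset.mem_Ioc]
      exact ⟨⟨hp0, le_trans hpn' hnN⟩, hpS, hpY⟩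
    · rw [Finset.mem_filter, Finset.mem_Ioc]
      exact ⟨⟨hn0, hnN⟩, hpn⟩
  have hcard1 : (F.card : ℝ) ≤ ∑ p ∈ P, x * (1/(p:ℝ)) := by
    have h1 : F.card ≤ ∑ p ∈ P, ((Finset.Ioc 0 N).filter (fun n => p ∣ n)).card :=
      le_trans (Finset.card_le_card hFP) (Finset.card_biUnion_le)
    have h2 : (F.card : ℝ) ≤ ∑ p ∈ P, (((N/p : ℕ)) : ℝ) := by
      have h2' : ∑ p ∈ P, ((Finset.Ioc 0 N).filter (fun n => p ∣ n)).card
          = ∑ p ∈ P, (N/p : ℕ) := by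
        apply Finset.sum_congr rfl
        intro p _
        exact Nat.Ioc_filter_dvd_card_eq_div N p
      rw [h2'] at h1
      exact_mod_cast h1
    refine le_trans h2 (Finset.sum_le_sum ?_)
    intro p hp
    rw [hP, Finset.mem_filter, Finset.mem_Ioc] at hp
    have hp0 : (0:ℝ) < p := by exact_mod_cast hp.1.1
    calc (((N/p : ℕ)) : ℝ) ≤ (N:ℝ)/p := Nat.cast_div_le
    _ ≤ x / p := by gcongr
    _ = x * (1/(p:ℝ)) := by ring
  set K : ℕ := Nat.log 2 (Nat.floor Y) with hK
  set M : ℕ := Nat.log 2 N with hM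
  have hfY2 : 2 ≤ Nat.floor Y := Nat.le_floor (by exact_mod_cast hY)
  have hK1 : 1 ≤ K := Nat.log_pos (by norm_num) hfY2
  have hmaps : ∀ p ∈ P, Nat.log 2 p ∈ Finset.Icc K M := by
    intro p hp
    rw [hP, Finset.mem_filter, Finset.mem_Ioc] at hp
    obtain ⟨⟨hp0, hpN⟩, hpS, hpY⟩ := hp
    have hfYp : Nat.floor Y ≤ p := by
      have : (Nat.floor Y : ℝ) < p := lt_of_le_of_lt (Nat.floor_le (le_of_lt hY0)) hpY
      exact_mod_cast le_of_lt this
    rw [Finset.mem_Icc]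
    exact ⟨Nat.log_mono_right hfYp, Nat.log_mono_right hpN⟩
  have hfib : ∑ p ∈ P, (1/(p:ℝ))
      = ∑ k ∈ Finset.Icc K M, ∑ p ∈ P.filter (fun p => Nat.log 2 p = k), (1/(p:ℝ)) :=
    (Finset.sum_fiberwise_of_maps_to hmaps _).symm
  have hinner : ∀ k ∈ Finset.Icc K M,
      ∑ p ∈ P.filter (fun p => Nat.log 2 p = k), (1/(p:ℝ))
        ≤ 8 * C₀ * Nat.factorial m * (1/((k:ℝ)*(k+1))) := by
    intro k hk
    have hk1 : 1 ≤ k := le_trans hK1 (Finset.mem_Icc.mp hk).1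
    set fib : Finset ℕ := P.filter (fun p => Nat.log 2 p = k) with hfibdef
    have hstep1 : ∑ p ∈ fib, (1/(p:ℝ)) ≤ fib.card • ((2:ℝ)^k)⁻¹ := by
      apply Finset.sum_le_card_nsmul
      intro p hp
      rw [hfibdef, Finset.mem_filter, hP, Finset.mem_filter, Finset.mem_Ioc] at hp
      obtain ⟨⟨⟨hp0, hpN⟩, _, _⟩, hlog⟩ := hp
      have h2k : (2:ℕ)^k ≤ p := by
        rw [← hlog]
        exact Nat.pow_log_le_self 2 (Nat.pos_iff_ne_zero.mp hp0)
      have h2k' : (2:ℝ)^k ≤ p := by exact_mod_cast h2k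
      rw [one_div]
      exact inv_anti₀ (by positivity) h2k'
    have hcardle : (fib.card : ℝ) ≤ C₀ * (2:ℝ)^(k+1) * Real.exp (-(Real.log ((2:ℝ)^(k+1)) ^ δ)) := by
      have hsub : (↑fib : Set ℕ) ⊆ {p : ℕ | p ∈ S ∧ (p:ℝ) ≤ (2:ℝ)^(k+1)} := by
        intro p hp
        simp only [Finset.coe_filter, Set.mem_setOf_eq, hfibdef, hP, Finset.mem_filter,
          Finset.mem_Ioc] at hp
        obtain ⟨⟨⟨hp0, hpN⟩, hpS, hpY⟩, hlog⟩ := hp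
        refine ⟨hpS, ?_⟩
        have : p < 2^(k+1) := by
          rw [← hlog]
          exact Nat.lt_pow_succ_log_self (by norm_num) p
        have : (p:ℝ) < ((2^(k+1) : ℕ) : ℝ) := by exact_mod_cast this
        calc (p:ℝ) ≤ ((2^(k+1):ℕ):ℝ) := le_of_lt this
        _ = (2:ℝ)^(k+1) := by push_cast; ring
      have hTfin : {p : ℕ | p ∈ S ∧ (p:ℝ) ≤ (2:ℝ)^(k+1)}.Finite := by
        apply Set.Finite.subset (Set.finite_Iic (2^(k+1) : ℕ))
        intro p hp
        simp only [Set.mem_setOf_eq] at hp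
        simp only [Set.mem_Iic]
        have : (p:ℝ) ≤ ((2^(k+1):ℕ):ℝ) := by
          calc (p:ℝ) ≤ (2:ℝ)^(k+1) := hp.2
          _ = ((2^(k+1):ℕ):ℝ) := by push_cast; ring
        exact_mod_cast this
      have h2t : (2:ℝ) ≤ (2:ℝ)^(k+1) := by
        calc (2:ℝ) = 2^1 := by norm_num
        _ ≤ (2:ℝ)^(k+1) := by apply pow_le_pow_right₀ (by norm_num); omega
      calc (fib.card : ℝ) = ((↑fib : Set ℕ).ncard : ℝ) := by rw [Set.ncard_coe_finset]
      _ ≤ ({p : ℕ | p ∈ S ∧ (p:ℝ) ≤ (2:ℝ)^(k+1)}.ncard : ℝ) := by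
          exact_mod_cast Set.ncard_le_ncard hsub hTfin
      _ ≤ C₀ * (2:ℝ)^(k+1) * Real.exp (-(Real.log ((2:ℝ)^(k+1)) ^ δ)) := hcount _ h2t
    have hlogpow : Real.log ((2:ℝ)^(k+1)) = ((k:ℝ)+1) * Real.log 2 := by
      rw [Real.log_pow]
      push_cast
      ring
    have hstep2 : (fib.card : ℝ) * ((2:ℝ)^k)⁻¹
        ≤ 2 * C₀ * Real.exp (-(((k:ℝ)+1) * Real.log 2) ^ δ) := by
      rw [← hlogpow]
      have hpos : (0:ℝ) < ((2:ℝ)^k)⁻¹ := by positivity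
      calc (fib.card : ℝ) * ((2:ℝ)^k)⁻¹
          ≤ (C₀ * (2:ℝ)^(k+1) * Real.exp (-(Real.log ((2:ℝ)^(k+1)) ^ δ))) * ((2:ℝ)^k)⁻¹ := by
            apply mul_le_mul_of_nonneg_right hcardle (le_of_lt hpos)
      _ = 2 * C₀ * Real.exp (-(Real.log ((2:ℝ)^(k+1)) ^ δ)) := by
            rw [pow_succ]
            field_simp
    have hexp := exp_bound δ hδ k hk1
    calc ∑ p ∈ fib, (1/(p:ℝ)) ≤ fib.card • ((2:ℝ)^k)⁻¹ := hstep1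
    _ = (fib.card : ℝ) * ((2:ℝ)^k)⁻¹ := by rw [nsmul_eq_mul]
    _ ≤ 2 * C₀ * Real.exp (-(((k:ℝ)+1) * Real.log 2) ^ δ) := hstep2
    _ ≤ 2 * C₀ * (4 * Nat.factorial m / ((k:ℝ)*(k+1))) := by
        apply mul_le_mul_of_nonneg_left hexp (by positivity)
    _ = 8 * C₀ * Nat.factorial m * (1/((k:ℝ)*(k+1))) := by ring
  have hsumP : ∑ p ∈ P, (1/(p:ℝ)) ≤ 8 * C₀ * Nat.factorial m * (1/(K:ℝ)) := by
    rw [hfib]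
    calc ∑ k ∈ Finset.Icc K M, ∑ p ∈ P.filter (fun p => Nat.log 2 p = k), (1/(p:ℝ))
        ≤ ∑ k ∈ Finset.Icc K M, 8 * C₀ * Nat.factorial m * (1/((k:ℝ)*(k+1))) :=
          Finset.sum_le_sum hinner
    _ = 8 * C₀ * Nat.factorial m * ∑ k ∈ Finset.Icc K M, (1/((k:ℝ)*(k+1))) := by
          rw [Finset.mul_sum]
    _ ≤ 8 * C₀ * Nat.factorial m * (1/(K:ℝ)) := by
          apply mul_le_mul_of_nonneg_left (tele_le K M hK1) (by positivity)
  have hlogY : 0 < Real.log Y := Real.log_pos (by linarith)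
  have hKY : Real.log Y ≤ 2 * K := by
    have h1 : Y < ((2^(K+1) : ℕ) : ℝ) := by
      calc Y < (Nat.floor Y : ℝ) + 1 := Nat.lt_floor_add_one Y
      _ ≤ ((2^(K+1) : ℕ) : ℝ) := by
          have : Nat.floor Y < 2^(K+1) := Nat.lt_pow_succ_log_self (by norm_num) _
          have : Nat.floor Y + 1 ≤ 2^(K+1) := this
          exact_mod_cast this
    have h2 : Real.log Y < Real.log ((2:ℝ)^(K+1)) := by
      apply Real.log_lt_log hY0
      calc Y < ((2^(K+1) : ℕ) : ℝ) := h1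
      _ = (2:ℝ)^(K+1) := by push_cast; ring
    rw [Real.log_pow] at h2
    have hlog2 : Real.log 2 < 1 := by
      have := Real.log_two_lt_d9
      linarith
    have hK1' : (1:ℝ) ≤ K := by exact_mod_cast hK1
    have hlog2' : 0 < Real.log 2 := Real.log_pos (by norm_num)
    push_cast at h2
    nlinarith
  have hKinv : (1/(K:ℝ)) ≤ 2 / Real.log Y := by
    have hK0 : (0:ℝ) < K := by exact_mod_cast hK1
    rw [div_le_div_iff₀ hK0 hlogY]
    linarith
  have hfinal : (F.card : ℝ) ≤ 16 * C₀ * Nat.factorial m * (x / Real.log Y) := by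
    calc (F.card : ℝ) ≤ ∑ p ∈ P, x * (1/(p:ℝ)) := hcard1
    _ = x * ∑ p ∈ P, (1/(p:ℝ)) := by rw [Finset.mul_sum]
    _ ≤ x * (8 * C₀ * Nat.factorial m * (1/(K:ℝ))) := by
        apply mul_le_mul_of_nonneg_left hsumP (le_of_lt hx0)
    _ ≤ x * (8 * C₀ * Nat.factorial m * (2 / Real.log Y)) := by
        apply mul_le_mul_of_nonneg_left _ (le_of_lt hx0)
        apply mul_le_mul_of_nonneg_left hKinv (by positivity)
    _ = 16 * C₀ * Nat.factorial m * (x / Real.log Y) := by ring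
  have ht1 : 0 ≤ x * Real.exp (-(Real.log x ^ δ)) := by positivity
  have ht2 : 0 ≤ x / Real.log x := by
    apply div_nonneg (le_of_lt hx0)
    exact Real.log_nonneg (by linarith)
  have hC : (0:ℝ) < 16 * C₀ * Nat.factorial m := by positivity
  calc (F.card : ℝ) ≤ 16 * C₀ * Nat.factorial m * (x / Real.log Y) := hfinal
  _ ≤ 16 * C₀ * Nat.factorial m
      * (x * Real.exp (-(Real.log x ^ δ)) + x / Real.log x + x / Real.log Y) := by
    apply mul_le_mul_of_nonneg_left _ (le_of_lt hC)
    linarith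
end

section
/- Let k be a positive integer, M ≥ 3 and P ≥ 2 real numbers, and let α_1, ..., α_k be integers with 2 ≤ α_i ≤ M for all i and ∏_{i=1}^k α_i ≤ P. Then ∑_{i=1}^k α_i ≤ 2k + M·(log P)/(log M). -/
open Real Filter

lemma key_pointwise (M x : ℝ) (hM : 3 ≤ M) (h2 : 2 ≤ x) (hx : x ≤ M) :
    x ≤ 2 + M * Real.log x / Real.log M := by
  have hM2 : (0:ℝ) < M - 2 := by linarith
  have hlogM : 0 < Real.log M := Real.log_pos (by linarith)
  set t : ℝ := (M - x) / (M - 2) with ht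
  set s : ℝ := (x - 2) / (M - 2) with hs
  have ht0 : 0 ≤ t := div_nonneg (by linarith) (by linarith)
  have hs0 : 0 ≤ s := div_nonneg (by linarith) (by linarith)
  have hts : t + s = 1 := by rw [ht, hs, ← add_div, div_eq_one_iff_eq hM2.ne']; ring
  have hcomb : t • (2:ℝ) + s • M = x := by
    simp only [smul_eq_mul, ht, hs]; field_simp; ring
  have hconc := strictConcaveOn_log_Ioi.concaveOn.2
    (Set.mem_Ioi.mpr (by norm_num : (0:ℝ) < 2))
    (Set.mem_Ioi.mpr (by linarith : (0:ℝ) < M)) ht0 hs0 hts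
  rw [hcomb] at hconc
  have hlog2 : 0 ≤ t • Real.log 2 := by
    have := Real.log_nonneg (by norm_num : (1:ℝ) ≤ 2)
    simp only [smul_eq_mul]; positivity
  have hlx : s * Real.log M ≤ Real.log x := by
    simp only [smul_eq_mul] at hconc hlog2; linarith
  have h1 : s * M ≤ M * Real.log x / Real.log M := by
    rw [le_div_iff₀ hlogM]
    calc s * M * Real.log M = M * (s * Real.log M) := by ring
    _ ≤ M * Real.log x := by
        apply mul_le_mul_of_nonneg_left hlx (by linarith)
  have h2' : x ≤ 2 + s * M := by
    have : x - 2 ≤ s * M := by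
      rw [hs, div_mul_eq_mul_div, le_div_iff₀ hM2]
      nlinarith
    linarith
  linarith
  
/-- If `2 ≤ α_i ≤ M` for all `i` and `∏ α_i ≤ P` (with `M ≥ 3`, `P ≥ 2`), then
`∑ α_i ≤ 2k + M·(log P)/(log M)`. -/
theorem sum_le_of_prod_le (k : ℕ) (hk : 1 ≤ k) (M P : ℝ) (hM : 3 ≤ M) (hP : 2 ≤ P)
    (α : Fin k → ℕ) (hlo : ∀ i, 2 ≤ α i) (hhi : ∀ i, (α i : ℝ) ≤ M)
    (hprod : ((∏ i, α i : ℕ) : ℝ) ≤ P) :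
    ((∑ i, α i : ℕ) : ℝ) ≤ 2 * k + M * Real.log P / Real.log M := by
  have hlogM : 0 < Real.log M := Real.log_pos (by linarith)
  have hne : ∀ i ∈ Finset.univ, ((α i : ℝ)) ≠ 0 := fun i _ => by
    have := hlo i; positivity
  have hstep : ((∑ i, α i : ℕ) : ℝ) ≤
      ∑ i : Fin k, (2 + M * Real.log (α i) / Real.log M) := by
    push_cast
    apply Finset.sum_le_sum
    intro i _
    exact key_pointwise M (α i) hM (by exact_mod_cast hlo i) (hhi i)
  have hsum : ∑ i : Fin k, (2 + M * Real.log (α i) / Real.log M)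
      = 2 * k + M * Real.log ((∏ i, α i : ℕ) : ℝ) / Real.log M := by
    rw [Finset.sum_add_distrib, Finset.sum_const]
    have : ∑ i : Fin k, M * Real.log (α i) / Real.log M
        = M * (∑ i : Fin k, Real.log (α i)) / Real.log M := by
      rw [Finset.mul_sum, Finset.sum_div]
    rw [this, ← Real.log_prod hne]
    push_cast
    simp [mul_comm]
  have hlogle : Real.log ((∏ i, α i : ℕ) : ℝ) ≤ Real.log P :=
    Real.log_le_log (by
      have : ∀ i ∈ Finset.univ, 0 < α i := fun i _ => by have := hlo i; omega
      exact_mod_cast Finset.prod_pos this) hprod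
  have hfin : M * Real.log ((∏ i, α i : ℕ) : ℝ) / Real.log M
      ≤ M * Real.log P / Real.log M := by
    gcongr
  linarith [hstep, hsum.le, hsum.ge]
end
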